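/- arXiv:2410.17682 — 3 statements merged into one kernel-verified Lean document; each statement's English description precedes it below -/
import Mathlib

section
/- Let V and Z be finite-dimensional vector spaces over a field, both of dimension N, and let e : V → Z be a linear isomorphism. For natural numbers n, k, s with n + s ≤ N and k + s ≤ N, define the linear map W : ⋀ⁿ V* ⊗ ⋀ᵏ Z → ⋀ⁿ⁺ˢ V* ⊗ ⋀ᵏ⁺ˢ Z by wedging s times with the element of V* ⊗ Z corresponding to e. If n + k > N - s, then W is not injective. -/
open TensorProduct

/-- The element of `V* ⊗ Z` corresponding to a linear map `e : V → Z`, viewed inside the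
tensor product of exterior algebras `(⋀ V*) ⊗ (⋀ Z)` via `ι ⊗ ι`. -/
noncomputable def coframeElem (K V Z : Type*) [Field K] [AddCommGroup V] [Module K V]
    [AddCommGroup Z] [Module K Z] [Module.Finite K V] [Module.Free K V] (e : V →ₗ[K] Z) :
    ExteriorAlgebra K (Module.Dual K V) ⊗[K] ExteriorAlgebra K Z :=
  TensorProduct.map (ExteriorAlgebra.ι K) (ExteriorAlgebra.ι K)
    ((dualTensorHomEquiv K V Z).symm e)

/-- The map `W_s^{(n,k)} : ⋀ⁿ V* ⊗ ⋀ᵏ Z → (⋀ V*) ⊗ (⋀ Z)`, `X ↦ X ∧ e ∧ ⋯ ∧ e` (`s` times),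
viewed as landing in the full tensor product of exterior algebras (the actual codomain
`⋀ⁿ⁺ˢ V* ⊗ ⋀ᵏ⁺ˢ Z` sits inside it as the range of the inclusion of the bigraded piece). -/
noncomputable def wedgeMap (K V Z : Type*) [Field K] [AddCommGroup V] [Module K V]
    [AddCommGroup Z] [Module K Z] [Module.Finite K V] [Module.Free K V] (e : V →ₗ[K] Z)
    (n k s : ℕ) :
    ((⋀[K]^n (Module.Dual K V)) ⊗[K] (⋀[K]^k Z)) →ₗ[K]
      (ExteriorAlgebra K (Module.Dual K V) ⊗[K] ExteriorAlgebra K Z) :=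
  (LinearMap.mulRight K ((coframeElem K V Z e) ^ s)).comp
    (TensorProduct.map (Submodule.subtype _) (Submodule.subtype _))

/-- The inclusion of the bigraded piece `⋀ⁿ V* ⊗ ⋀ᵏ Z` into `(⋀ V*) ⊗ (⋀ Z)`. -/
noncomputable def gradedIncl (K V Z : Type*) [Field K] [AddCommGroup V] [Module K V]
    [AddCommGroup Z] [Module K Z] (n k : ℕ) :
    ((⋀[K]^n (Module.Dual K V)) ⊗[K] (⋀[K]^k Z)) →ₗ[K]
      (ExteriorAlgebra K (Module.Dual K V) ⊗[K] ExteriorAlgebra K Z) :=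
  TensorProduct.map (Submodule.subtype _) (Submodule.subtype _)

lemma prod_ofFn_ι_mem (R M : Type*) [CommRing R] [AddCommGroup M] [Module R M] :
    ∀ (n : ℕ) (v : Fin n → M), (List.ofFn fun i => ExteriorAlgebra.ι R (v i)).prod ∈ ⋀[R]^n M := by
  intro n
  induction n with
  | zero =>
    intro v
    rw [List.ofFn_zero, List.prod_nil]
    show (1 : ExteriorAlgebra R M) ∈ LinearMap.range (ExteriorAlgebra.ι R (M := M)) ^ 0
    rw [pow_zero]
    exact Submodule.one_le.mp le_rfl
  | succ n ih =>
    intro v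
    rw [List.ofFn_succ, List.prod_cons]
    show _ ∈ LinearMap.range (ExteriorAlgebra.ι R (M := M)) ^ (n + 1)
    rw [pow_succ']
    exact Submodule.mul_mem_mul (LinearMap.mem_range_self _ _) (ih _)

lemma comp_append_eq {α β : Type*} {m n : ℕ} (g : α → β) (a : Fin m → α) (b : Fin n → α) :
    (fun i => g (Fin.append a b i)) = Fin.append (fun i => g (a i)) (fun i => g (b i)) := by
  funext i
  refine Fin.addCases (fun i => ?_) (fun i => ?_) i <;> simp [Fin.append_left, Fin.append_right]

lemma pow_tensor_expand {R A B : Type*} [CommRing R] [Ring A] [Ring B] [Algebra R A]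
    [Algebra R B] {N : ℕ} (p : Fin N → A) (q : Fin N → B) (s : ℕ) :
    (∑ i, p i ⊗ₜ[R] q i) ^ s =
      ∑ f : Fin s → Fin N,
        (List.ofFn fun t => p (f t)).prod ⊗ₜ[R] (List.ofFn fun t => q (f t)).prod := by
  induction s with
  | zero =>
    rw [pow_zero, Fintype.sum_unique]
    simp [Algebra.TensorProduct.one_def]
  | succ s ih =>
    rw [pow_succ', ih, Finset.sum_mul_sum]
    rw [← Equiv.sum_comp (Fin.consEquiv (fun _ => Fin N))
      (fun g => (List.ofFn fun t => p (g t)).prod ⊗ₜ[R] (List.ofFn fun t => q (g t)).prod)]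
    rw [Fintype.sum_prod_type]
    refine Finset.sum_congr rfl fun i _ => Finset.sum_congr rfl fun f _ => ?_
    simp [Fin.consEquiv, List.ofFn_succ, Algebra.TensorProduct.tmul_mul_tmul]

set_option maxHeartbeats 1000000 in
set_option synthInstance.maxHeartbeats 400000 in
theorem wedgeMap_not_injective_of_lt (K V Z : Type*) [Field K] [AddCommGroup V] [Module K V]
    [AddCommGroup Z] [Module K Z] [FiniteDimensional K V] [FiniteDimensional K Z]
    (N : ℕ) (hV : Module.finrank K V = N) (hZ : Module.finrank K Z = N)
    (e : V ≃ₗ[K] Z) (n k s : ℕ) (hs : 1 ≤ s) (hn : n + s ≤ N) (hk : k + s ≤ N)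
    (h : N - s < n + k) :
    ¬ Function.Injective (wedgeMap K V Z (e : V →ₗ[K] Z) n k s) := by
  intro hinj
  have hsN : s ≤ N := by omega
  have hnN : n ≤ N := by omega
  have hkN : k ≤ N := by omega
  have hNlt : N < n + k + s := by omega
  set b : Module.Basis (Fin N) K V := Module.finBasisOfFinrankEq K V hV with hb
  set u : Fin N → Module.Dual K V := fun i => b.coord i with hu
  set w : Fin N → Z := fun i => e (b i) with hw
  set a : Fin n → Fin N := fun j => ⟨j.1, lt_of_lt_of_le j.2 hnN⟩ with ha
  set c : Fin k → Fin N := fun j => ⟨N - k + j.1, by omega⟩ with hc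
  have hainj : Function.Injective a := by
    intro i j hij
    have h2 : (a i).1 = (a j).1 := congrArg Fin.val hij
    simp only [ha] at h2
    exact Fin.ext h2
  have hcinj : Function.Injective c := by
    intro i j hij
    have h2 : (c i).1 = (c j).1 := congrArg Fin.val hij
    simp only [hc] at h2
    exact Fin.ext (by omega)
  set A : Finset (Fin N) := Finset.univ.image a ∪ Finset.univ.image c with hA
  have hAc : Aᶜ.card < s := by
    have hsub : Aᶜ ⊆ Finset.univ.filter (fun i : Fin N => n ≤ i.1 ∧ i.1 < N - k) := by
      intro i hi
      rw [Finset.mem_compl] at hi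
      have h1 : ∀ jj : Fin n, a jj ≠ i := fun jj hji =>
        hi (Finset.mem_union_left _ (Finset.mem_image.mpr ⟨jj, Finset.mem_univ _, hji⟩))
      have h2 : ∀ jj : Fin k, c jj ≠ i := fun jj hji =>
        hi (Finset.mem_union_right _ (Finset.mem_image.mpr ⟨jj, Finset.mem_univ _, hji⟩))
      refine Finset.mem_filter.mpr ⟨Finset.mem_univ _, ?_, ?_⟩
      · by_contra hlt
        push_neg at hlt
        exact h1 ⟨i.1, by omega⟩ (Fin.ext rfl)
      · by_contra hge
        push_neg at hge
        have hiN : i.1 < N := i.2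
        refine h2 ⟨i.1 - (N - k), by omega⟩ (Fin.ext ?_)
        simp only [hc]
        omega
    have h1 := Finset.card_le_card hsub
    have h2 : (Finset.univ.filter (fun i : Fin N => n ≤ i.1 ∧ i.1 < N - k)).card ≤
        (Finset.Ico n (N - k)).card := by
      apply Finset.card_le_card_of_injOn (fun i => i.1)
      · intro i hi
        rw [Finset.mem_coe, Finset.mem_filter] at hi
        exact Finset.mem_Ico.mpr hi.2
      · intro i _ j _ hij
        exact Fin.ext hij
    rw [Nat.card_Ico] at h2
    omega
  set x : ExteriorAlgebra K (Module.Dual K V) :=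
    ExteriorAlgebra.ιMulti K n (fun j => u (a j)) with hxdef
  set y : ExteriorAlgebra K Z := ExteriorAlgebra.ιMulti K k (fun j => w (c j)) with hydef
  have hx : x ∈ ⋀[K]^n (Module.Dual K V) := by
    rw [hxdef, ExteriorAlgebra.ιMulti_apply]
    exact prod_ofFn_ι_mem K _ n _
  have hy : y ∈ ⋀[K]^k Z := by
    rw [hydef, ExteriorAlgebra.ιMulti_apply]
    exact prod_ofFn_ι_mem K _ k _
  set X : ((⋀[K]^n (Module.Dual K V)) ⊗[K] (⋀[K]^k Z)) :=
    (⟨x, hx⟩ : ⋀[K]^n (Module.Dual K V)) ⊗ₜ[K] (⟨y, hy⟩ : ⋀[K]^k Z) with hXdef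
  -- the coframe element as an explicit sum
  have hθ : coframeElem K V Z (e : V →ₗ[K] Z) =
      ∑ i, (ExteriorAlgebra.ι K (u i)) ⊗ₜ[K] (ExteriorAlgebra.ι K (w i)) := by
    have hsymm : (dualTensorHomEquiv K V Z).symm (e : V →ₗ[K] Z) =
        ∑ i, (b.coord i) ⊗ₜ[K] (e (b i)) := by
      rw [LinearEquiv.symm_apply_eq, map_sum]
      ext v
      simp only [dualTensorHomEquiv, dualTensorHomEquivOfBasis_apply, LinearMap.sum_apply,
        dualTensorHom_apply, Module.Basis.coord_apply, LinearEquiv.coe_coe,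
        LinearEquiv.ofBijective_apply]
      have hsum : ∑ i : Fin N, (b.repr v) i • e (b i) = e (∑ i : Fin N, (b.repr v) i • b i) := by
        rw [map_sum]
        exact Finset.sum_congr rfl fun i _ => (map_smul e _ _).symm
      rw [hsum, b.sum_repr]
    rw [coframeElem, hsymm, map_sum]
    refine Finset.sum_congr rfl fun i _ => ?_
    rw [TensorProduct.map_tmul]
  -- multiplying x by products of ι's
  have hmulx : ∀ f : Fin s → Fin N,
      x * (List.ofFn fun t => ExteriorAlgebra.ι K (u (f t))).prod =
        ExteriorAlgebra.ιMulti K (n + s) (fun r => u (Fin.append a f r)) := by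
    intro f
    rw [hxdef, ExteriorAlgebra.ιMulti_apply, ExteriorAlgebra.ιMulti_apply, ← List.prod_append,
      ← List.ofFn_fin_append]
    congr 1
    rw [comp_append_eq (fun i => ExteriorAlgebra.ι K (u i)) a f]
  have hmuly : ∀ f : Fin s → Fin N,
      y * (List.ofFn fun t => ExteriorAlgebra.ι K (w (f t))).prod =
        ExteriorAlgebra.ιMulti K (k + s) (fun r => w (Fin.append c f r)) := by
    intro f
    rw [hydef, ExteriorAlgebra.ιMulti_apply, ExteriorAlgebra.ιMulti_apply, ← List.prod_append,
      ← List.ofFn_fin_append]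
    congr 1
    rw [comp_append_eq (fun i => ExteriorAlgebra.ι K (w i)) c f]
  -- the key vanishing
  have key : (x ⊗ₜ[K] y) * (coframeElem K V Z (e : V →ₗ[K] Z)) ^ s = 0 := by
    rw [hθ, pow_tensor_expand, Finset.mul_sum]
    apply Finset.sum_eq_zero
    intro f _
    rw [Algebra.TensorProduct.tmul_mul_tmul]
    by_cases hf : Function.Injective f
    · have hex : ∃ t, f t ∈ A := by
        by_contra hall
        push_neg at hall
        have hle := Finset.card_le_card_of_injOn (s := (Finset.univ : Finset (Fin s)))
          (t := Aᶜ) f (fun t _ => Finset.mem_compl.mpr (hall t)) (fun t1 _ t2 _ hh => hf hh)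
        simp only [Finset.card_univ, Fintype.card_fin] at hle
        omega
      obtain ⟨t, ht⟩ := hex
      rcases Finset.mem_union.mp ht with hmem | hmem
      · obtain ⟨j, -, hj⟩ := Finset.mem_image.mp hmem
        rw [hmulx f]
        have h0 : ExteriorAlgebra.ιMulti K (n + s) (fun r => u (Fin.append a f r)) = 0 := by
          refine AlternatingMap.map_eq_zero_of_eq _ _
            (i := Fin.castAdd s j) (j := Fin.natAdd n t) ?_ ?_
          · simp only [Fin.append_left, Fin.append_right, hj]
          · intro hcon
            have := congrArg Fin.val hcon
            simp only [Fin.coe_castAdd, Fin.coe_natAdd] at this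
            omega
        rw [h0, TensorProduct.zero_tmul]
      · obtain ⟨j, -, hj⟩ := Finset.mem_image.mp hmem
        rw [hmuly f]
        have h0 : ExteriorAlgebra.ιMulti K (k + s) (fun r => w (Fin.append c f r)) = 0 := by
          refine AlternatingMap.map_eq_zero_of_eq _ _
            (i := Fin.castAdd s j) (j := Fin.natAdd k t) ?_ ?_
          · simp only [Fin.append_left, Fin.append_right, hj]
          · intro hcon
            have := congrArg Fin.val hcon
            simp only [Fin.coe_castAdd, Fin.coe_natAdd] at this
            omega
        rw [h0, TensorProduct.tmul_zero]
    · rw [Function.not_injective_iff] at hf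
      obtain ⟨t1, t2, heq, hne⟩ := hf
      rw [hmulx f]
      have h0 : ExteriorAlgebra.ιMulti K (n + s) (fun r => u (Fin.append a f r)) = 0 := by
        refine AlternatingMap.map_eq_zero_of_eq _ _
          (i := Fin.natAdd n t1) (j := Fin.natAdd n t2) ?_ ?_
        · simp only [Fin.append_right, heq]
        · intro hcon
          have := congrArg Fin.val hcon
          simp only [Fin.coe_natAdd] at this
          exact hne (Fin.ext (by omega))
      rw [h0, TensorProduct.zero_tmul]
  -- wedgeMap kills X
  have hX0 : wedgeMap K V Z (e : V →ₗ[K] Z) n k s X = 0 := by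
    simp only [wedgeMap, LinearMap.coe_comp, Function.comp_apply, LinearMap.mulRight_apply,
      hXdef, TensorProduct.map_tmul, Submodule.coe_subtype]
    exact key
  -- X is nonzero
  have hXne : X ≠ 0 := by
    intro h0
    have himg : x ⊗ₜ[K] y = (0 : ExteriorAlgebra K (Module.Dual K V) ⊗[K] ExteriorAlgebra K Z) := by
      have := congrArg (TensorProduct.map
        (Submodule.subtype (⋀[K]^n (Module.Dual K V))) (Submodule.subtype (⋀[K]^k Z))) h0
      simpa [hXdef, TensorProduct.map_tmul] using this
    -- functionals
    set cb : Module.Basis (Fin N) K Z := b.map e with hcb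
    set L1 : Module.Dual K V →ₗ[K] (Fin n → K) :=
      LinearMap.pi (fun j => Module.Dual.eval K V (b (a j))) with hL1
    set L2 : Z →ₗ[K] (Fin k → K) := LinearMap.pi (fun j => cb.coord (c j)) with hL2
    set fA : (Module.Dual K V) [⋀^Fin n]→ₗ[K] K :=
      (Matrix.detRowAlternating).compLinearMap L1 with hfA
    set fB : Z [⋀^Fin k]→ₗ[K] K := (Matrix.detRowAlternating).compLinearMap L2 with hfB
    set φ : ExteriorAlgebra K (Module.Dual K V) →ₗ[K] K :=
      ExteriorAlgebra.liftAlternating (Pi.single n fA) with hφdef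
    set ψ : ExteriorAlgebra K Z →ₗ[K] K :=
      ExteriorAlgebra.liftAlternating (Pi.single k fB) with hψdef
    have hφx : φ x = 1 := by
      rw [hφdef, hxdef, ExteriorAlgebra.liftAlternating_apply_ιMulti, Pi.single_eq_same,
        hfA, AlternatingMap.compLinearMap_apply]
      have hmat : (fun i => L1 (u (a i))) = (1 : Matrix (Fin n) (Fin n) K) := by
        funext i j
        simp only [hL1, LinearMap.pi_apply, hu, Module.Dual.eval_apply, Module.Basis.coord_apply,
          Module.Basis.repr_self]
        rw [Matrix.one_apply, Finsupp.single_apply]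
        by_cases hij : i = j
        · simp [hij]
        · have : a j ≠ a i := fun hh => hij (hainj hh.symm)
          simp [hij, this]
      rw [hmat]
      exact Matrix.det_one
    have hψy : ψ y = 1 := by
      rw [hψdef, hydef, ExteriorAlgebra.liftAlternating_apply_ιMulti, Pi.single_eq_same,
        hfB, AlternatingMap.compLinearMap_apply]
      have hmat : (fun i => L2 (w (c i))) = (1 : Matrix (Fin k) (Fin k) K) := by
        funext i j
        have hwcb : w (c i) = cb (c i) := by simp [hw, hcb, Module.Basis.map_apply]
        simp only [hL2, LinearMap.pi_apply, hwcb, Module.Basis.coord_apply, Module.Basis.repr_self]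
        rw [Matrix.one_apply, Finsupp.single_apply]
        by_cases hij : i = j
        · simp [hij]
        · have : c i ≠ c j := fun hh => hij (hcinj hh)
          simp [hij, this]
      rw [hmat]
      exact Matrix.det_one
    have hfinal := congrArg ((TensorProduct.lid K K).toLinearMap ∘ₗ TensorProduct.map φ ψ) himg
    simp only [LinearMap.coe_comp, Function.comp_apply, TensorProduct.map_tmul, map_zero,
      LinearEquiv.coe_coe, TensorProduct.lid_tmul, hφx, hψy, smul_eq_mul, mul_one] at hfinal
    exact one_ne_zero hfinal
  have : X = 0 := hinj (by rw [hX0, map_zero])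
  exact hXne this
end

section
/- Let V and Z be N-dimensional vector spaces over a field and e : V → Z a linear isomorphism. For n, k, s with n + s ≤ N and k + s ≤ N, let W : ⋀ⁿ V* ⊗ ⋀ᵏ Z → ⋀ⁿ⁺ˢ V* ⊗ ⋀ᵏ⁺ˢ Z be the map given by wedging s times with the element of V* ⊗ Z corresponding to e. If n + k < N - s, then W is not surjective. -/
open TensorProduct

section MyAuxiliary

open Finset ExteriorAlgebra Module

open Finset

lemma myChoose_prod_id (N n : ℕ) : ∀ s, n + s ≤ N →
    N.choose (n+s) * ∏ i ∈ range s, (n+1+i) = N.choose n * ∏ i ∈ range s, (N-n-i) := by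
  intro s
  induction s with
  | zero => simp
  | succ s ih =>
    intro h
    have h' : n + s ≤ N := by omega
    rw [prod_range_succ, prod_range_succ]
    have e1 : n+1+s = (n+s)+1 := by omega
    calc N.choose (n+(s+1)) * ((∏ i ∈ range s, (n+1+i)) * (n+1+s))
        = (N.choose ((n+s)+1) * ((n+s)+1)) * ∏ i ∈ range s, (n+1+i) := by
          rw [e1, mul_comm (∏ i ∈ range s, (n+1+i)) ((n+s)+1), ← mul_assoc]; rfl
      _ = (N.choose (n+s) * (N - (n+s))) * ∏ i ∈ range s, (n+1+i) := by
          rw [Nat.choose_succ_right_eq]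
      _ = (N.choose (n+s) * ∏ i ∈ range s, (n+1+i)) * (N-n-s) := by
          rw [Nat.sub_sub, mul_comm (N.choose (n+s)) (N - (n+s)), mul_assoc,
            mul_comm (N - (n+s))]
      _ = (N.choose n * ∏ i ∈ range s, (N-n-i)) * (N-n-s) := by rw [ih h']
      _ = N.choose n * ((∏ i ∈ range s, (N-n-i)) * (N-n-s)) := by rw [mul_assoc]

lemma myProd_lt (N n k s : ℕ) (hs : 1 ≤ s) (h : n + k + s < N) :
    ∏ i ∈ range s, (n+1+i) < ∏ i ∈ range s, (N-k-i) := by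
  rw [← Finset.prod_range_reflect (fun i => n+1+i) s]
  apply Finset.prod_lt_prod_of_nonempty
  · intro i hi; simp only [mem_range] at hi; omega
  · intro i hi; simp only [mem_range] at hi; omega
  · exact nonempty_range_iff.mpr (by omega)

lemma myChoose_mul_lt (N n k s : ℕ) (hs : 1 ≤ s) (hn : n + s ≤ N) (hk : k + s ≤ N)
    (h : n + k + s < N) :
    N.choose n * N.choose k < N.choose (n+s) * N.choose (k+s) := by
  set A := ∏ i ∈ range s, (n+1+i) with hA
  set B := ∏ i ∈ range s, (k+1+i) with hB
  set P := ∏ i ∈ range s, (N-n-i) with hP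
  set Q := ∏ i ∈ range s, (N-k-i) with hQ
  have id1 : N.choose (n+s) * A = N.choose n * P := myChoose_prod_id N n s hn
  have id2 : N.choose (k+s) * B = N.choose k * Q := myChoose_prod_id N k s hk
  have hAQ : A < Q := myProd_lt N n k s hs h
  have hBP : B < P := myProd_lt N k n s hs (by omega)
  have hABPQ : A * B < P * Q := by
    calc A * B < Q * P := mul_lt_mul'' hAQ hBP (Nat.zero_le _) (Nat.zero_le _)
    _ = P * Q := mul_comm _ _
  have hc : 0 < N.choose n * N.choose k :=
    Nat.mul_pos (Nat.choose_pos (by omega)) (Nat.choose_pos (by omega))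
  have key : (N.choose n * N.choose k) * (P * Q) = (N.choose (n+s) * N.choose (k+s)) * (A * B) := by
    rw [mul_mul_mul_comm, ← id1, ← id2, mul_mul_mul_comm]
  have : (N.choose n * N.choose k) * (A * B) < (N.choose (n+s) * N.choose (k+s)) * (A * B) := by
    calc (N.choose n * N.choose k) * (A * B)
        < (N.choose n * N.choose k) * (P * Q) := by
          exact mul_lt_mul_of_pos_left hABPQ hc
      _ = _ := key
  exact Nat.lt_of_mul_lt_mul_right this

open ExteriorAlgebra Module

variable {K M : Type*} [Field K] [AddCommGroup M] [Module K M]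

/-- The wedge monomial associated with an `m`-element subset of `Fin N`, given a basis. -/
noncomputable def myMono {N : ℕ} (b : Basis (Fin N) K M) (m : ℕ)
    (s : {s : Finset (Fin N) // s.card = m}) : ExteriorAlgebra K M :=
  ιMulti K m (fun i => b (s.1.orderEmbOfFin s.2 i))

lemma myMono_mem {N : ℕ} (b : Basis (Fin N) K M) (m : ℕ)
    (s : {s : Finset (Fin N) // s.card = m}) : myMono b m s ∈ ⋀[K]^m M :=
  ιMulti_range K m ⟨_, rfl⟩

lemma myMono_term_mem {N : ℕ} (b : Basis (Fin N) K M) (m : ℕ) (r : Fin m → Fin N) :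
    ιMulti K m (fun i => b (r i)) ∈ Submodule.span K (Set.range (myMono b m)) := by
  by_cases hr : Function.Injective r
  · -- sort `r` into a monotone map, which is the enumeration of its image
    set σ := Tuple.sort r with hσ
    have hmono : Monotone (r ∘ σ) := Tuple.monotone_sort r
    have hinj : Function.Injective (r ∘ σ) := hr.comp (Equiv.injective _)
    have hsm : StrictMono (r ∘ σ) := hmono.strictMono_of_injective hinj
    set s : Finset (Fin N) := Finset.univ.image (r ∘ σ) with hs
    have hcard : s.card = m := by
      rw [hs, Finset.card_image_of_injective _ hinj, Finset.card_univ, Fintype.card_fin]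
    have hmem : ∀ i, (r ∘ σ) i ∈ s := fun i => Finset.mem_image_of_mem _ (Finset.mem_univ i)
    have heq : (r ∘ σ) = s.orderEmbOfFin hcard :=
      Finset.orderEmbOfFin_unique hcard hmem hsm
    have hperm := (ιMulti K m (M := M)).map_perm (fun i => b (r i)) σ
    have hval : ((fun i => b (r i)) ∘ σ) = fun i => b (s.orderEmbOfFin hcard i) := by
      funext i
      simp only [Function.comp_apply]
      exact congrArg b (congrFun heq i)
    rw [hval] at hperm
    -- hperm : ιMulti (monomial vectors of s) = sign σ • ιMulti (fun i => b (r i))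
    have hmono_mem : myMono b m ⟨s, hcard⟩ ∈ Submodule.span K (Set.range (myMono b m)) :=
      Submodule.subset_span ⟨⟨s, hcard⟩, rfl⟩
    rcases Int.units_eq_one_or (Equiv.Perm.sign σ) with hsign | hsign
    · rw [hsign, one_smul] at hperm
      rw [← hperm]
      exact hmono_mem
    · rw [hsign] at hperm
      have : ιMulti K m (fun i => b (r i)) = - myMono b m ⟨s, hcard⟩ := by
        rw [myMono]
        rw [hperm]
        simp
      rw [this]
      exact Submodule.neg_mem _ hmono_mem
  · have : ¬ Function.Injective (fun i => b (r i)) := by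
      intro hc
      exact hr fun i j hij => hc (congrArg b hij)
    rw [AlternatingMap.map_eq_zero_of_not_injective _ _ this]
    exact Submodule.zero_mem _

lemma mySpan {N : ℕ} (b : Basis (Fin N) K M) (m : ℕ) :
    ⋀[K]^m M = Submodule.span K (Set.range (myMono b m)) := by
  refine le_antisymm ?_ ?_
  · rw [← ιMulti_span_fixedDegree K m, Submodule.span_le]
    rintro _ ⟨v, rfl⟩
    have h1 : (fun i => ∑ j : Fin N, b.repr (v i) j • b j) = v :=
      funext fun i => b.sum_repr (v i)
    rw [← h1, ← AlternatingMap.coe_multilinearMap (ιMulti K m (M := M)),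
      MultilinearMap.map_sum]
    refine Submodule.sum_mem _ fun r _ => ?_
    rw [MultilinearMap.map_smul_univ, AlternatingMap.coe_multilinearMap]
    exact Submodule.smul_mem _ _ (myMono_term_mem b m r)
  · rw [Submodule.span_le]
    rintro _ ⟨s, rfl⟩
    exact myMono_mem b m s

/-- The determinant functional detecting the coefficient of a wedge monomial. -/
noncomputable def myDetFun {N : ℕ} (b : Basis (Fin N) K M) (m : ℕ)
    (t : {s : Finset (Fin N) // s.card = m}) : M [⋀^Fin m]→ₗ[K] K :=
  (Matrix.detRowAlternating (R := K) (n := Fin m)).compLinearMap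
    (LinearMap.pi fun j => b.coord (t.1.orderEmbOfFin t.2 j))

lemma myDetFun_apply_mono {N : ℕ} (b : Basis (Fin N) K M) (m : ℕ)
    (t s : {s : Finset (Fin N) // s.card = m}) :
    myDetFun b m t (fun i => b (s.1.orderEmbOfFin s.2 i)) = if t = s then 1 else 0 := by
  have hA : ∀ i j : Fin m,
      (LinearMap.pi fun j => b.coord (t.1.orderEmbOfFin t.2 j)) (b (s.1.orderEmbOfFin s.2 i)) j
        = if s.1.orderEmbOfFin s.2 i = t.1.orderEmbOfFin t.2 j then (1:K) else 0 := by
    intro i j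
    simp [LinearMap.pi_apply, Basis.coord_apply, Basis.repr_self, Finsupp.single_apply]
  rw [myDetFun, AlternatingMap.compLinearMap_apply]
  by_cases hts : t = s
  · subst hts
    rw [if_pos rfl]
    have hfun : (fun i => (LinearMap.pi fun j => b.coord (t.1.orderEmbOfFin t.2 j))
        (b (t.1.orderEmbOfFin t.2 i))) = (1 : Matrix (Fin m) (Fin m) K) := by
      funext i j
      rw [hA i j, Matrix.one_apply]
      congr 1
      simp only [eq_iff_iff]
      exact ⟨fun hh => (t.1.orderEmbOfFin t.2).injective hh, fun hh => congrArg _ hh⟩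
    rw [hfun]
    exact Matrix.det_one
  · rw [if_neg hts]
    have hne : s.1 ≠ t.1 := fun hc => hts (Subtype.ext hc.symm)
    have hnsub : ¬ s.1 ⊆ t.1 := fun hc =>
      hne (Finset.eq_of_subset_of_card_le hc (by rw [s.2, t.2]))
    obtain ⟨x, hxs, hxt⟩ := Finset.not_subset.mp hnsub
    have : x ∈ Set.range (s.1.orderEmbOfFin s.2) := by
      rw [Finset.range_orderEmbOfFin]; exact hxs
    obtain ⟨i, hi⟩ := this
    apply Matrix.det_eq_zero_of_row_eq_zero i
    intro j
    show (LinearMap.pi fun j => b.coord (t.1.orderEmbOfFin t.2 j))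
        (b (s.1.orderEmbOfFin s.2 i)) j = 0
    rw [hA i j, if_neg]
    intro hc
    exact hxt (hi ▸ hc ▸ Finset.orderEmbOfFin_mem t.1 t.2 j)

lemma myMono_li {N : ℕ} (b : Basis (Fin N) K M) (m : ℕ) :
    LinearIndependent K (myMono b m) := by
  rw [Fintype.linearIndependent_iff]
  intro c hsum t
  set F := ExteriorAlgebra.liftAlternating (R := K) (M := M) (N := K)
      (fun i => if h : i = m then h ▸ myDetFun b m t else 0) with hF
  have happ : ∀ s, F (myMono b m s) = if t = s then 1 else 0 := by
    intro s
    rw [hF, myMono, liftAlternating_apply_ιMulti, dif_pos rfl]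
    exact myDetFun_apply_mono b m t s
  have h0 : F (∑ s, c s • myMono b m s) = 0 := by rw [hsum, map_zero]
  rw [map_sum] at h0
  simp_rw [map_smul, happ, smul_eq_mul, mul_ite, mul_one, mul_zero] at h0
  rwa [Finset.sum_ite_eq Finset.univ t c, if_pos (Finset.mem_univ t)] at h0

lemma myExtFinite {N : ℕ} (b : Basis (Fin N) K M) (m : ℕ) :
    Module.Finite K ↥(⋀[K]^m M) := by
  have h := FiniteDimensional.span_of_finite K (Set.finite_range (myMono b m))
  rwa [← mySpan b m] at h

lemma myExtFinrank [FiniteDimensional K M] {N : ℕ} (hM : Module.finrank K M = N) (m : ℕ) :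
    Module.finrank K ↥(⋀[K]^m M) = N.choose m := by
  let b : Basis (Fin N) K M := (Module.finBasis K M).reindex (finCongr hM)
  rw [mySpan b m, finrank_span_eq_card (myMono_li b m), Fintype.card_finset_len,
    Fintype.card_fin]

lemma myRangeNe {K E A B C D : Type*} [Field K]
    [AddCommGroup A] [Module K A] [AddCommGroup B] [Module K B]
    [AddCommGroup C] [Module K C] [AddCommGroup D] [Module K D]
    [AddCommGroup E] [Module K E]
    [Module.Finite K A] [Module.Finite K B]
    (f : A ⊗[K] B →ₗ[K] E) (g : C ⊗[K] D →ₗ[K] E)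
    (hg : Function.Injective g)
    (hlt : Module.finrank K A * Module.finrank K B <
      Module.finrank K C * Module.finrank K D) :
    LinearMap.range f ≠ LinearMap.range g := by
  intro hEq
  have h2 : Module.finrank K ↥(LinearMap.range f) ≤
      Module.finrank K A * Module.finrank K B :=
    (LinearMap.finrank_range_le f).trans_eq Module.finrank_tensorProduct
  rw [hEq, LinearMap.finrank_range_of_inj hg, Module.finrank_tensorProduct] at h2
  exact absurd h2 (not_le.mpr hlt)


end MyAuxiliary


set_option synthInstance.maxHeartbeats 1000000 in
set_option maxHeartbeats 1000000 in
theorem wedgeMap_not_surjective_of_lt (K V Z : Type*) [Field K] [AddCommGroup V] [Module K V]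
    [AddCommGroup Z] [Module K Z] [FiniteDimensional K V] [FiniteDimensional K Z]
    (N : ℕ) (hV : Module.finrank K V = N) (hZ : Module.finrank K Z = N)
    (e : V ≃ₗ[K] Z) (n k s : ℕ) (hs : 1 ≤ s) (hn : n + s ≤ N) (hk : k + s ≤ N)
    (h : n + k < N - s) :
    LinearMap.range (wedgeMap K V Z (e : V →ₗ[K] Z) n k s) ≠
      LinearMap.range (gradedIncl K V Z (n + s) (k + s)) := by
  have hVD : Module.finrank K (Module.Dual K V) = N := by rw [Subspace.dual_finrank_eq, hV]
  let bV : Module.Basis (Fin N) K (Module.Dual K V) :=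
    (Module.finBasis K (Module.Dual K V)).reindex (finCongr hVD)
  let bZ : Module.Basis (Fin N) K Z := (Module.finBasis K Z).reindex (finCongr hZ)
  haveI i1 : Module.Finite K ↥(⋀[K]^n (Module.Dual K V)) := myExtFinite bV n
  haveI i2 : Module.Finite K ↥(⋀[K]^k Z) := myExtFinite bZ k
  have hinj : Function.Injective (gradedIncl K V Z (n+s) (k+s)) := by
    rw [gradedIncl, ← LinearMap.lTensor_comp_rTensor, LinearMap.coe_comp]
    exact (Module.Flat.lTensor_preserves_injective_linearMap _
        (Submodule.injective_subtype _)).comp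
      (Module.Flat.rTensor_preserves_injective_linearMap _ (Submodule.injective_subtype _))
  refine myRangeNe _ _ hinj ?_
  rw [myExtFinrank hVD, myExtFinrank hZ, myExtFinrank hVD, myExtFinrank hZ]
  exact myChoose_mul_lt N n k s hs hn hk (by omega)
end

section
/- Let V and Z be 4-dimensional vector spaces over a field of characteristic zero, e : V → Z an isomorphism, and V' ⊂ V a 3-dimensional subspace. Then the map W : ⋀² (V')* ⊗ ⋀¹ Z → ⋀³ (V')* ⊗ ⋀² Z given by wedging with e|_{V'} ∈ (V')* ⊗ Z is surjective but not injective, while the corresponding 'bulk' map ⋀² V* ⊗ ⋀¹ Z → ⋀³ V* ⊗ ⋀² Z given by wedging with e is bijective. -/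
set_option maxHeartbeats 1000000
set_option synthInstance.maxHeartbeats 1000000

open TensorProduct

section AuxExterior

open ExteriorAlgebra

variable {K M : Type*} [Field K] [AddCommGroup M] [Module K M]

/-- The alternating form given by a determinant of dual evaluations. -/
noncomputable def detFunctional (n : ℕ) (φ : Fin n → Module.Dual K M) : M [⋀^Fin n]→ₗ[K] K :=
  (Matrix.detRowAlternating : (Fin n → K) [⋀^Fin n]→ₗ[K] K).compLinearMap (LinearMap.pi φ)

lemma detFunctional_apply (n : ℕ) (φ : Fin n → Module.Dual K M) (v : Fin n → M) :
    detFunctional n φ v = Matrix.det (Matrix.of fun i j => φ j (v i)) := rfl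

/-- The coefficient functional on the exterior algebra in degree `n`. -/
noncomputable def dcoord (n : ℕ) (φ : Fin n → Module.Dual K M) :
    ExteriorAlgebra K M →ₗ[K] K :=
  liftAlternating (Pi.single n (detFunctional n φ))

lemma dcoord_ιMulti (n : ℕ) (φ : Fin n → Module.Dual K M) (v : Fin n → M) :
    dcoord n φ (ιMulti K n v) = Matrix.det (Matrix.of fun i j => φ j (v i)) := by
  rw [dcoord, liftAlternating_apply_ιMulti, Pi.single_eq_same, detFunctional_apply]

lemma ιMulti_one_eq (v : Fin 1 → M) : ιMulti K 1 v = ι K (v 0) := by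
  simp [ιMulti_apply, List.ofFn_succ]

lemma ιMulti_two_eq (v : Fin 2 → M) : ιMulti K 2 v = ι K (v 0) * ι K (v 1) := by
  simp [ιMulti_apply, List.ofFn_succ, mul_assoc, Matrix.vecTail]

lemma ιMulti_three_eq (v : Fin 3 → M) :
    ιMulti K 3 v = ι K (v 0) * ι K (v 1) * ι K (v 2) := by
  simp only [ιMulti_apply, List.ofFn_succ, List.ofFn_zero, List.prod_cons, List.prod_nil,
    mul_one, mul_assoc]
  rfl

lemma ι_eq_ιMulti_one (x : M) : ι K x = ιMulti K 1 ![x] := by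
  rw [ιMulti_one_eq]
  rfl

lemma ι_mul_ι_eq_ιMulti_two (x y : M) : ι K x * ι K y = ιMulti K 2 ![x, y] := by
  rw [ιMulti_two_eq]
  rfl

lemma ι_mul_ι_mul_ι_eq_ιMulti_three (x y z : M) :
    ι K x * ι K y * ι K z = ιMulti K 3 ![x, y, z] := by
  rw [ιMulti_three_eq]
  rfl

lemma mem_exteriorPower_one (x : M) : ι K x ∈ ⋀[K]^1 M := by
  show ι K x ∈ LinearMap.range (ι K) ^ 1
  rw [pow_one]
  exact LinearMap.mem_range_self _ x

lemma mem_exteriorPower_two (x y : M) : ι K x * ι K y ∈ ⋀[K]^2 M := by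
  have := ιMulti_range K 2 (M := M) ⟨![x, y], rfl⟩
  rwa [ιMulti_two_eq, Matrix.cons_val_zero, Matrix.cons_val_one, Matrix.cons_val_zero] at this

lemma mem_exteriorPower_three (x y z : M) : ι K x * ι K y * ι K z ∈ ⋀[K]^3 M := by
  have := ιMulti_range K 3 (M := M) ⟨![x, y, z], rfl⟩
  rwa [ιMulti_three_eq, Matrix.cons_val_zero, Matrix.cons_val_one, Matrix.cons_val_zero,
    show (![x, y, z]) 2 = z from rfl] at this

lemma mul_ι_mem (n : ℕ) {x : ExteriorAlgebra K M} (hx : x ∈ ⋀[K]^n M) (f : M) :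
    x * ι K f ∈ ⋀[K]^(n+1) M := by
  show _ ∈ LinearMap.range (ι K) ^ (n+1)
  rw [pow_succ]
  exact Submodule.mul_mem_mul hx (LinearMap.mem_range_self _ f)

lemma ι_anticomm (x y : M) : ι K x * ι K y = -(ι K y * ι K x) :=
  eq_neg_of_add_eq_zero_left (ι_add_mul_swap x y)

lemma triple_repeat_left (x y : M) : ι K x * ι K y * ι K x = 0 := by
  rw [ι_anticomm x y, neg_mul, mul_assoc, ι_sq_zero, mul_zero, neg_zero]

lemma triple_repeat_right (x y : M) : ι K x * ι K y * ι K y = 0 := by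
  rw [mul_assoc, ι_sq_zero, mul_zero]

lemma triple_swap12 (x y z : M) : ι K y * ι K x * ι K z = -(ι K x * ι K y * ι K z) := by
  rw [ι_anticomm y x, neg_mul]

lemma triple_swap23 (x y z : M) : ι K x * ι K z * ι K y = -(ι K x * ι K y * ι K z) := by
  rw [mul_assoc, ι_anticomm z y, mul_neg, mul_assoc]

lemma triple_cyc (x y z : M) : ι K z * ι K x * ι K y = ι K x * ι K y * ι K z := by
  rw [triple_swap12 x z y, triple_swap23 x y z, neg_neg]

lemma triple_cyc' (x y z : M) : ι K y * ι K z * ι K x = ι K x * ι K y * ι K z := by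
  exact (triple_cyc y z x).symm

lemma triple_rev (x y z : M) : ι K z * ι K y * ι K x = -(ι K x * ι K y * ι K z) := by
  rw [triple_swap12 y z x, triple_cyc' x y z]

lemma ιMulti_comp_eq_zero_of_not_injective {n : ℕ} {ι : Type*} (σ : Fin n → ι)
    (w : ι → M) (hinj : ¬ Function.Injective σ) : ιMulti K n (w ∘ σ) = 0 := by
  have : ∃ i j, i ≠ j ∧ σ i = σ j := by
    simp only [Function.Injective, not_forall] at hinj
    obtain ⟨i, j, h1, h2⟩ := hinj
    exact ⟨i, j, h2, h1⟩
  obtain ⟨i, j, hij, hσ⟩ := this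
  exact AlternatingMap.map_eq_zero_of_eq _ _ (by simp [Function.comp, hσ]) hij

lemma exteriorPower_eq_span {ι : Type*} [Fintype ι] [DecidableEq ι] (v : ι → M)
    (hv : Submodule.span K (Set.range v) = ⊤) (n : ℕ) :
    (⋀[K]^n M : Submodule K (ExteriorAlgebra K M)) =
      Submodule.span K (Set.range fun σ : Fin n → ι => ιMulti K n (v ∘ σ)) := by
  refine le_antisymm ?_ ?_
  · rw [← ιMulti_span_fixedDegree, Submodule.span_le]
    rintro _ ⟨g, rfl⟩
    have hg : ∀ i : Fin n, ∃ c : ι → K, ∑ j, c j • v j = g i := by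
      intro i
      exact Submodule.mem_span_range_iff_exists_fun K |>.mp
        (hv ▸ Submodule.mem_top : g i ∈ Submodule.span K (Set.range v))
    choose c hc using hg
    have : ιMulti K n g = ∑ σ : Fin n → ι, (∏ i, c i (σ i)) • ιMulti K n (v ∘ σ) := by
      calc ιMulti K n g = ιMulti K n (fun i => ∑ j, c i j • v j) := by
            congr 1; exact (funext fun i => (hc i)).symm
        _ = ∑ σ : Fin n → ι, ιMulti K n (fun i => c i (σ i) • v (σ i)) := by
            exact (ιMulti K n).toMultilinearMap.map_sum (fun i j => c i j • v j)
        _ = ∑ σ : Fin n → ι, (∏ i, c i (σ i)) • ιMulti K n (v ∘ σ) := by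
            refine Finset.sum_congr rfl fun σ _ => ?_
            exact (ιMulti K n).toMultilinearMap.map_smul_univ (fun i => c i (σ i)) (v ∘ σ)
    rw [this]
    exact Submodule.sum_mem _ fun σ _ =>
      Submodule.smul_mem _ _ (Submodule.subset_span ⟨σ, rfl⟩)
  · rw [Submodule.span_le]
    rintro _ ⟨σ, rfl⟩
    exact ιMulti_range K n ⟨v ∘ σ, rfl⟩

lemma span_ιMulti_le_sorted {ι : Type*} [Fintype ι] [LinearOrder ι] (v : ι → M) (n : ℕ) :
    Submodule.span K (Set.range fun σ : Fin n → ι => ιMulti K n (v ∘ σ)) ≤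
      Submodule.span K (Set.range (ιMulti_family K n v)) := by
  rw [Submodule.span_le]
  rintro _ ⟨σ, rfl⟩
  show ιMulti K n (v ∘ σ) ∈ (Submodule.span K (Set.range (ιMulti_family K n v)) : Set _)
  by_cases hinj : Function.Injective σ
  · set s : Finset ι := Finset.univ.image σ with hs
    have hcard : s.card = n := by
      rw [hs, Finset.card_image_of_injective _ hinj, Finset.card_univ, Fintype.card_fin]
    set τ : Fin n → ι := fun i => (s.orderIsoOfFin hcard i : ι) with hτ
    have hmem : ∀ i, σ i ∈ s := fun i => Finset.mem_image_of_mem _ (Finset.mem_univ i)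
    set π0 : Fin n → Fin n := fun i => (s.orderIsoOfFin hcard).symm ⟨σ i, hmem i⟩ with hπ0
    have hπ0inj : Function.Injective π0 := by
      intro i j h
      apply hinj
      have h2 : (⟨σ i, hmem i⟩ : {x // x ∈ s}) = ⟨σ j, hmem j⟩ :=
        (s.orderIsoOfFin hcard).symm.injective h
      exact congrArg Subtype.val h2
    have hπ0bij : Function.Bijective π0 := (Finite.injective_iff_bijective).mp hπ0inj
    set π : Equiv.Perm (Fin n) := Equiv.ofBijective π0 hπ0bij with hπ
    have hcomp : v ∘ σ = (v ∘ τ) ∘ π := by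
      funext i
      show v (σ i) = v (τ (π i))
      have hτπ : τ (π i) = σ i := by
        show ((s.orderIsoOfFin hcard) ((s.orderIsoOfFin hcard).symm ⟨σ i, hmem i⟩) : ι) = σ i
        rw [OrderIso.apply_symm_apply]
      rw [hτπ]
    have hperm : ιMulti K n (v ∘ σ) = Equiv.Perm.sign π • ιMulti K n (v ∘ τ) := by
      rw [hcomp]
      exact AlternatingMap.map_perm (ιMulti K n) (v ∘ τ) π
    have hτmem : ιMulti K n (v ∘ τ) ∈ Submodule.span K (Set.range (ιMulti_family K n v)) :=
      Submodule.subset_span ⟨⟨s, hcard⟩, rfl⟩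
    rw [hperm]
    rcases Int.units_eq_one_or (Equiv.Perm.sign π) with h | h
    · rw [h, one_smul]; exact hτmem
    · rw [h]
      simpa using Submodule.neg_mem _ hτmem
  · have : ∃ i j, i ≠ j ∧ σ i = σ j := by
      simp only [Function.Injective, not_forall] at hinj
      obtain ⟨i, j, h1, h2⟩ := hinj
      exact ⟨i, j, h2, h1⟩
    obtain ⟨i, j, hij, hσ⟩ := this
    have hz : ιMulti K n (v ∘ σ) = 0 :=
      AlternatingMap.map_eq_zero_of_eq _ _ (by simp [Function.comp, hσ]) hij
    rw [hz]
    exact Submodule.zero_mem _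

lemma linearIndependent_ιMulti_family {ι : Type*} [Fintype ι] [LinearOrder ι]
    (b : Module.Basis ι K M) (n : ℕ) :
    LinearIndependent K (ιMulti_family K n (M := M) b) := by
  classical
  rw [Fintype.linearIndependent_iff]
  intro g hg t
  set δ : ExteriorAlgebra K M →ₗ[K] K :=
    dcoord n (fun j => b.coord (t.1.orderIsoOfFin t.2 j)) with hδ
  have happ := congrArg δ hg
  rw [map_sum, map_zero] at happ
  have hterm : ∀ s : {s : Finset ι // s.card = n},
      δ (g s • ιMulti_family K n (M := M) b s) = if s = t then g s else 0 := by
    intro s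
    rw [map_smul, hδ,
      show ιMulti_family K n (M := M) b s = ιMulti K n (fun i => b (s.1.orderIsoOfFin s.2 i))
        from rfl, dcoord_ιMulti]
    by_cases hst : s = t
    · subst hst
      have h1 : (Matrix.of fun i j =>
          b.coord (s.1.orderIsoOfFin s.2 j) (b (s.1.orderIsoOfFin s.2 i))) = 1 := by
        ext i j
        rw [Matrix.of_apply, Module.Basis.coord_apply, Module.Basis.repr_self, Matrix.one_apply,
          Finsupp.single_apply]
        by_cases h : i = j
        · subst h; simp
        · have : (s.1.orderIsoOfFin s.2 i : ι) ≠ (s.1.orderIsoOfFin s.2 j : ι) := by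
            intro hc
            exact h ((s.1.orderIsoOfFin s.2).injective (Subtype.coe_injective hc))
          simp [this, h]
      rw [h1, Matrix.det_one, if_pos rfl, smul_eq_mul, mul_one]
    · have hne : ¬ s.1 ⊆ t.1 := by
        intro hsub
        exact hst (Subtype.ext (Finset.eq_of_subset_of_card_le hsub (by rw [s.2, t.2])))
      obtain ⟨x, hxs, hxt⟩ := Set.not_subset.mp (by exact_mod_cast hne)
      obtain ⟨i₀, hi₀⟩ := (s.1.orderIsoOfFin s.2).surjective ⟨x, hxs⟩
      have hrow : ∀ j, (Matrix.of fun i j =>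
          b.coord (t.1.orderIsoOfFin t.2 j) (b (s.1.orderIsoOfFin s.2 i))) i₀ j = 0 := by
        intro j
        rw [Matrix.of_apply, Module.Basis.coord_apply, Module.Basis.repr_self, Finsupp.single_apply]
        have : (s.1.orderIsoOfFin s.2 i₀ : ι) ≠ (t.1.orderIsoOfFin t.2 j : ι) := by
          intro hc
          apply hxt
          rw [show x = (s.1.orderIsoOfFin s.2 i₀ : ι) from by rw [hi₀], hc]
          exact (t.1.orderIsoOfFin t.2 j).2
        simp only [Finset.coe_orderIsoOfFin_apply] at this
        simp [this]
      rw [Matrix.det_eq_zero_of_row_eq_zero i₀ hrow, if_neg hst, smul_eq_mul, mul_zero]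
  have hterm' : ∀ s : Set.powersetCard ι n,
      δ (g s • ιMulti_family K n (M := M) b s) = if s = t then g s else 0 := by
    intro s; convert hterm s; exact Iff.rfl
  have hsum : ∑ s, δ (g s • ιMulti_family K n (M := M) b s) = g t := by
    rw [Finset.sum_congr rfl fun s _ => hterm' s, Finset.sum_ite_eq' Finset.univ t g,
      if_pos (Finset.mem_univ t)]
  rw [← hsum]
  exact happ

lemma exteriorPower_eq_span_sorted {ι : Type*} [Fintype ι] [LinearOrder ι] (b : Module.Basis ι K M)
    (n : ℕ) :
    (⋀[K]^n M : Submodule K (ExteriorAlgebra K M)) =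
      Submodule.span K (Set.range (ιMulti_family K n (M := M) (⇑b))) := by
  classical
  refine le_antisymm ?_ ?_
  · rw [exteriorPower_eq_span (v := ⇑b) b.span_eq n]
    exact span_ιMulti_le_sorted _ n
  · rw [Submodule.span_le]; rintro _ ⟨s, rfl⟩; exact ιMulti_range K n ⟨_, rfl⟩

lemma finiteDimensional_exteriorPower {ι : Type*} [Fintype ι] [LinearOrder ι] (b : Module.Basis ι K M)
    (n : ℕ) : FiniteDimensional K (⋀[K]^n M : Submodule K (ExteriorAlgebra K M)) := by
  rw [exteriorPower_eq_span_sorted b n]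
  exact FiniteDimensional.span_of_finite K (Set.finite_range _)

lemma finrank_exteriorPower {m : ℕ} (b : Module.Basis (Fin m) K M) (n : ℕ) :
    Module.finrank K (⋀[K]^n M : Submodule K (ExteriorAlgebra K M)) = m.choose n := by
  classical
  rw [exteriorPower_eq_span_sorted b n,
    finrank_span_eq_card (linearIndependent_ιMulti_family b n)]
  rw [Fintype.card_eq_nat_card, Set.powersetCard.card, Nat.card_eq_fintype_card,
    Fintype.card_fin]


lemma tmap_injective {A B C D : Type*} [AddCommGroup A] [Module K A] [AddCommGroup B]
    [Module K B] [AddCommGroup C] [Module K C] [AddCommGroup D] [Module K D]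
    {f : A →ₗ[K] B} {g : C →ₗ[K] D} (hf : Function.Injective f) (hg : Function.Injective g) :
    Function.Injective (TensorProduct.map f g) := by
  rw [← LinearMap.rTensor_comp_lTensor]
  exact (Module.Flat.rTensor_preserves_injective_linearMap f hf).comp
    (Module.Flat.lTensor_preserves_injective_linearMap g hg)

end AuxExterior

section SettingHelpers

open ExteriorAlgebra

variable {K V Z : Type*} [Field K] [AddCommGroup V] [Module K V] [AddCommGroup Z] [Module K Z]

lemma coframeElem_eq {κ : Type*} [Fintype κ] [Module.Finite K V] [Module.Free K V]
    (b : Module.Basis κ K V) (e : V →ₗ[K] Z) :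
    coframeElem K V Z e = ∑ i, (ι K (b.coord i)) ⊗ₜ[K] (ι K (e (b i))) := by
  have h1 : (dualTensorHomEquiv K V Z).symm e = ∑ i, b.coord i ⊗ₜ[K] e (b i) := by
    have h2 : dualTensorHomEquiv K V Z (∑ i, b.coord i ⊗ₜ[K] e (b i)) = e := by
      rw [show (dualTensorHomEquiv K V Z) =
        dualTensorHomEquivOfBasis (Module.Free.chooseBasis K V) from
          dualTensorHomEquiv_eq_dualTensorHomEquivOfBasis _,
        dualTensorHomEquivOfBasis_apply]
      apply LinearMap.ext; intro v
      rw [map_sum]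
      simp only [LinearMap.sum_apply, dualTensorHom_apply, Module.Basis.coord_apply]
      rw [show (∑ x, b.repr v x • e (b x)) = e (∑ x, b.repr v x • b x) by
        rw [map_sum]; simp only [map_smul], b.sum_repr]
    exact (LinearEquiv.symm_apply_eq _).mpr h2.symm
  rw [coframeElem, h1, map_sum]
  exact Finset.sum_congr rfl fun i _ => TensorProduct.map_tmul _ _ _ _

lemma gradedIncl_tmul (n k : ℕ) (x : ⋀[K]^n (Module.Dual K V)) (y : ⋀[K]^k Z) :
    gradedIncl K V Z n k (x ⊗ₜ[K] y) =
      (x : ExteriorAlgebra K (Module.Dual K V)) ⊗ₜ[K] (y : ExteriorAlgebra K Z) := by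
  simp [gradedIncl]

lemma wedgeMap_tmul [Module.Finite K V] [Module.Free K V] (e : V →ₗ[K] Z) (n k : ℕ)
    (x : ⋀[K]^n (Module.Dual K V)) (y : ⋀[K]^k Z) :
    wedgeMap K V Z e n k 1 (x ⊗ₜ[K] y) =
      ((x : ExteriorAlgebra K (Module.Dual K V)) ⊗ₜ[K] (y : ExteriorAlgebra K Z)) *
        coframeElem K V Z e := by
  simp [wedgeMap, pow_one]

lemma tmul_mul_coframe {κ : Type*} [Fintype κ] [Module.Finite K V] [Module.Free K V]
    (b : Module.Basis κ K V) (e : V →ₗ[K] Z) (x : ExteriorAlgebra K (Module.Dual K V))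
    (y : ExteriorAlgebra K Z) :
    (x ⊗ₜ[K] y) * coframeElem K V Z e =
      ∑ i, (x * ι K (b.coord i)) ⊗ₜ[K] (y * ι K (e (b i))) := by
  rw [coframeElem_eq b e, Finset.mul_sum]
  exact Finset.sum_congr rfl fun i _ => Algebra.TensorProduct.tmul_mul_tmul _ _ _ _

lemma range_wedgeMap_le [Module.Finite K V] [Module.Free K V] (e : V →ₗ[K] Z) (n k : ℕ) :
    LinearMap.range (wedgeMap K V Z e n k 1) ≤
      LinearMap.range (gradedIncl K V Z (n+1) (k+1)) := by
  rintro _ ⟨t, rfl⟩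
  induction t using TensorProduct.induction_on with
  | zero => rw [map_zero]; exact Submodule.zero_mem _
  | add u v hu hv => rw [map_add]; exact Submodule.add_mem _ hu hv
  | tmul x y =>
    rw [wedgeMap_tmul, coframeElem]
    generalize (dualTensorHomEquiv K V Z).symm e = t0
    induction t0 using TensorProduct.induction_on with
    | zero => rw [map_zero, mul_zero]; exact Submodule.zero_mem _
    | add u v hu hv => rw [map_add, mul_add]; exact Submodule.add_mem _ hu hv
    | tmul f z =>
      rw [TensorProduct.map_tmul, Algebra.TensorProduct.tmul_mul_tmul]
      exact ⟨(⟨(x : ExteriorAlgebra K (Module.Dual K V)) * ι K f, mul_ι_mem n x.2 f⟩ :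
          ⋀[K]^(n+1) (Module.Dual K V)) ⊗ₜ[K]
          (⟨(y : ExteriorAlgebra K Z) * ι K z, mul_ι_mem k y.2 z⟩ : ⋀[K]^(k+1) Z),
        by rw [gradedIncl_tmul]⟩

end SettingHelpers

section Boundary

open ExteriorAlgebra

variable {K V' Z : Type*} [Field K] [AddCommGroup V'] [Module K V'] [AddCommGroup Z] [Module K Z]
variable [FiniteDimensional K V'] [FiniteDimensional K Z]

lemma boundary_wedge_apply (c : Module.Basis (Fin 3) K V') (e' : V' →ₗ[K] Z)
    {x : ExteriorAlgebra K (Module.Dual K V')} (hx : x ∈ ⋀[K]^2 (Module.Dual K V'))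
    {y : ExteriorAlgebra K Z} (hy : y ∈ ⋀[K]^1 Z) :
    wedgeMap K V' Z e' 2 1 1 ((⟨x, hx⟩ : ⋀[K]^2 (Module.Dual K V')) ⊗ₜ[K] (⟨y, hy⟩ : ⋀[K]^1 Z)) =
      ∑ i : Fin 3, (x * ι K (c.coord i)) ⊗ₜ[K] (y * ι K (e' (c i))) := by
  rw [wedgeMap_tmul, tmul_mul_coframe c e']

lemma boundary_gen_mem (c : Module.Basis (Fin 3) K V') (e' : V' →ₗ[K] Z) (j : Fin 3) (z : Z) :
    (ι K (c.coord 0) * ι K (c.coord 1) * ι K (c.coord 2)) ⊗ₜ[K] (ι K z * ι K (e' (c j)))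
      ∈ LinearMap.range (wedgeMap K V' Z e' 2 1 1) := by
  fin_cases j
  · refine ⟨(⟨ι K (c.coord 1) * ι K (c.coord 2), mem_exteriorPower_two _ _⟩ :
        ⋀[K]^2 (Module.Dual K V')) ⊗ₜ[K] (⟨ι K z, mem_exteriorPower_one z⟩ : ⋀[K]^1 Z), ?_⟩
    rw [boundary_wedge_apply c e', Fin.sum_univ_three,
      triple_cyc' (c.coord 0) (c.coord 1) (c.coord 2), triple_repeat_left, triple_repeat_right,
      zero_tmul, zero_tmul, add_zero, add_zero]
    rfl
  · refine ⟨(⟨ι K (c.coord 2) * ι K (c.coord 0), mem_exteriorPower_two _ _⟩ :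
        ⋀[K]^2 (Module.Dual K V')) ⊗ₜ[K] (⟨ι K z, mem_exteriorPower_one z⟩ : ⋀[K]^1 Z), ?_⟩
    rw [boundary_wedge_apply c e', Fin.sum_univ_three,
      triple_cyc (c.coord 0) (c.coord 1) (c.coord 2), triple_repeat_left, triple_repeat_right,
      zero_tmul, zero_tmul, zero_add, add_zero]
    rfl
  · refine ⟨(⟨ι K (c.coord 0) * ι K (c.coord 1), mem_exteriorPower_two _ _⟩ :
        ⋀[K]^2 (Module.Dual K V')) ⊗ₜ[K] (⟨ι K z, mem_exteriorPower_one z⟩ : ⋀[K]^1 Z), ?_⟩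
    rw [boundary_wedge_apply c e', Fin.sum_univ_three,
      triple_repeat_left, triple_repeat_right, zero_tmul, zero_tmul, zero_add, zero_add]
    rfl

lemma boundary_range_ge (hV' : Module.finrank K V' = 3) (hZ : Module.finrank K Z = 4)
    (e' : V' →ₗ[K] Z) (he' : Function.Injective e') :
    LinearMap.range (gradedIncl K V' Z 3 2) ≤ LinearMap.range (wedgeMap K V' Z e' 2 1 1) := by
  classical
  set c : Module.Basis (Fin 3) K V' := Module.finBasisOfFinrankEq K V' hV' with hc
  have hind : LinearIndependent K (fun i => e' (c i)) :=
    c.linearIndependent.map' e' (LinearMap.ker_eq_bot.mpr he')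
  have hne : ∃ w, w ∉ Submodule.span K (Set.range fun i => e' (c i)) := by
    by_contra h
    push_neg at h
    have htop : Submodule.span K (Set.range fun i => e' (c i)) = ⊤ :=
      eq_top_iff.mpr fun x _ => h x
    have h3 : Module.finrank K (Submodule.span K (Set.range fun i => e' (c i))) = 3 :=
      finrank_span_eq_card hind
    rw [htop, finrank_top, hZ] at h3
    omega
  obtain ⟨w, hw⟩ := hne
  set zfam : Fin 4 → Z := Fin.snoc (fun i => e' (c i)) w with hzfam
  have hzind : LinearIndependent K zfam := linearIndependent_fin_snoc.mpr ⟨hind, hw⟩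
  have hzspan : Submodule.span K (Set.range zfam) = ⊤ :=
    hzind.span_eq_top_of_card_eq_finrank (by rw [Fintype.card_fin, hZ])
  rw [gradedIncl, TensorProduct.range_map_eq_span_tmul, Submodule.span_le]
  rintro _ ⟨a, b, rfl⟩
  have ha : ((⋀[K]^3 (Module.Dual K V')).subtype a : ExteriorAlgebra K (Module.Dual K V')) ∈
      Submodule.span K (Set.range fun σ : Fin 3 → Fin 3 => ιMulti K 3 (⇑c.dualBasis ∘ σ)) := by
    rw [← exteriorPower_eq_span (⇑c.dualBasis) c.dualBasis.span_eq 3]; exact a.2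
  have hb : ((⋀[K]^2 Z).subtype b : ExteriorAlgebra K Z) ∈
      Submodule.span K (Set.range fun τ : Fin 2 → Fin 4 => ιMulti K 2 (zfam ∘ τ)) := by
    rw [← exteriorPower_eq_span zfam hzspan 2]; exact b.2
  have hmem := Submodule.apply_mem_map₂
    (TensorProduct.mk K (ExteriorAlgebra K (Module.Dual K V')) (ExteriorAlgebra K Z)) ha hb
  rw [Submodule.map₂_span_span] at hmem
  refine Submodule.span_le.mpr ?_ hmem
  rintro _ ⟨u1, ⟨σ, rfl⟩, u2, ⟨τ, rfl⟩, rfl⟩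
  show ιMulti K 3 (⇑c.dualBasis ∘ σ) ⊗ₜ[K] ιMulti K 2 (zfam ∘ τ) ∈
    LinearMap.range (wedgeMap K V' Z e' 2 1 1)
  by_cases hσ : Function.Injective σ
  swap
  · rw [ιMulti_comp_eq_zero_of_not_injective σ _ hσ, zero_tmul]
    exact Submodule.zero_mem _
  have hbij := (Finite.injective_iff_bijective).mp hσ
  have hmain : ιMulti K 3 ⇑c.dualBasis ⊗ₜ[K] ιMulti K 2 (zfam ∘ τ) ∈
      LinearMap.range (wedgeMap K V' Z e' 2 1 1) := by
    have hF : ιMulti K 3 ⇑c.dualBasis = ι K (c.coord 0) * ι K (c.coord 1) * ι K (c.coord 2) := by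
      rw [ιMulti_three_eq]; simp [Module.Basis.coe_dualBasis]
    rw [ιMulti_two_eq, hF]
    simp only [Function.comp_apply]
    rcases Fin.eq_castSucc_or_eq_last (τ 1) with ⟨j, hj⟩ | hj
    · rw [hj, show zfam (Fin.castSucc j) = e' (c j) from Fin.snoc_castSucc _ _ j]
      exact boundary_gen_mem c e' j (zfam (τ 0))
    · rw [hj, show zfam (Fin.last 3) = w from Fin.snoc_last _ _]
      rcases Fin.eq_castSucc_or_eq_last (τ 0) with ⟨j, hj0⟩ | hj0
      · rw [hj0, show zfam (Fin.castSucc j) = e' (c j) from Fin.snoc_castSucc _ _ j,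
          ι_anticomm (e' (c j)) w, tmul_neg]
        exact Submodule.neg_mem _ (boundary_gen_mem c e' j w)
      · rw [hj0, show zfam (Fin.last 3) = w from Fin.snoc_last _ _, ι_sq_zero, tmul_zero]
        exact Submodule.zero_mem _
  set π := Equiv.ofBijective σ hbij with hπ
  have hperm : ιMulti K 3 (⇑c.dualBasis ∘ σ) = Equiv.Perm.sign π • ιMulti K 3 ⇑c.dualBasis := by
    have hre : ⇑c.dualBasis ∘ σ = ⇑c.dualBasis ∘ π := rfl
    rw [hre]
    exact AlternatingMap.map_perm _ _ π
  rw [hperm]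
  rcases Int.units_eq_one_or (Equiv.Perm.sign π) with h | h
  · rw [h, one_smul]; exact hmain
  · rw [h, show ((-1 : ℤˣ) • ιMulti K 3 ⇑c.dualBasis) = -(ιMulti K 3 ⇑c.dualBasis) by simp,
      neg_tmul]
    exact Submodule.neg_mem _ hmain

lemma exists_dual_eq_one {W : Type*} [AddCommGroup W] [Module K W] {w : W} (hw : w ≠ 0) :
    ∃ ζ : Module.Dual K W, ζ w = 1 := by
  set bb := Module.Free.chooseBasis K W
  have h1 : bb.repr w ≠ 0 := fun h => hw (by rwa [LinearEquiv.map_eq_zero_iff] at h)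
  obtain ⟨i, hi⟩ := Finsupp.ne_iff.mp h1
  rw [Finsupp.coe_zero, Pi.zero_apply] at hi
  exact ⟨(bb.repr w i)⁻¹ • bb.coord i, by
    simp [Module.Basis.coord_apply, inv_mul_cancel₀ hi]⟩

lemma boundary_not_injective (hV' : Module.finrank K V' = 3) (e' : V' →ₗ[K] Z)
    (he' : Function.Injective e') :
    ¬ Function.Injective (wedgeMap K V' Z e' 2 1 1) := by
  classical
  set c : Module.Basis (Fin 3) K V' := Module.finBasisOfFinrankEq K V' hV' with hc
  set X := ((⟨ι K (c.coord 1) * ι K (c.coord 2), mem_exteriorPower_two _ _⟩ :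
      ⋀[K]^2 (Module.Dual K V')) ⊗ₜ[K]
      (⟨ι K (e' (c 0)), mem_exteriorPower_one _⟩ : ⋀[K]^1 Z)) with hX
  have hWX : wedgeMap K V' Z e' 2 1 1 X = 0 := by
    rw [hX, boundary_wedge_apply c e', Fin.sum_univ_three, ι_sq_zero, tmul_zero,
      triple_repeat_left, triple_repeat_right, zero_tmul, zero_tmul, add_zero, add_zero]
  have hXne : X ≠ 0 := by
    intro h0
    have h2 : (ι K (c.coord 1) * ι K (c.coord 2)) ⊗ₜ[K] (ι K (e' (c 0))) =
        (0 : ExteriorAlgebra K (Module.Dual K V') ⊗[K] ExteriorAlgebra K Z) := by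
      have h3 : gradedIncl K V' Z 2 1 X = 0 := by rw [h0, map_zero]
      rwa [hX, gradedIncl_tmul] at h3
    have hnz : e' (c 0) ≠ 0 := fun h => c.ne_zero 0 (he' (by rw [h]; exact (map_zero e').symm))
    obtain ⟨ζ, hζ⟩ := exists_dual_eq_one (K := K) hnz
    set Φ := (LinearMap.mul' K K).comp (TensorProduct.map
      (dcoord 2 ![Module.Dual.eval K V' (c 1), Module.Dual.eval K V' (c 2)])
      (dcoord 1 ![ζ])) with hΦdef
    have hΦ := congrArg Φ h2
    rw [map_zero Φ, hΦdef, LinearMap.comp_apply, TensorProduct.map_tmul,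
      LinearMap.mul'_apply] at hΦ
    have e1 : dcoord 2 ![Module.Dual.eval K V' (c 1), Module.Dual.eval K V' (c 2)]
        (ι K (c.coord 1) * ι K (c.coord 2)) = 1 := by
      rw [ι_mul_ι_eq_ιMulti_two (c.coord 1) (c.coord 2), dcoord_ιMulti, Matrix.det_fin_two]
      simp [Fin.isValue, Module.Basis.coord_apply, Module.Basis.repr_self, Finsupp.single_apply]
    have e2 : dcoord 1 ![ζ] (ι K (e' (c 0))) = 1 := by
      rw [ι_eq_ιMulti_one (e' (c 0)), dcoord_ιMulti, Matrix.det_fin_one]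
      simp [hζ]
    rw [e1, e2, mul_one] at hΦ
    exact one_ne_zero hΦ
  exact fun hinj => hXne (hinj (by rw [hWX, map_zero]))

end Boundary

section Bulk

open ExteriorAlgebra

variable {K V Z : Type*} [Field K] [AddCommGroup V] [Module K V] [AddCommGroup Z] [Module K Z]
variable [FiniteDimensional K V] [FiniteDimensional K Z]

lemma fin4_cases {a b c d : Fin 4} (hab : a ≠ b) (hac : a ≠ c) (had : a ≠ d) (hbc : b ≠ c)
    (hbd : b ≠ d) (hcd : c ≠ d) : ∀ i : Fin 4, i = a ∨ i = b ∨ i = c ∨ i = d := by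
  revert hab hac had hbc hbd hcd
  revert a b c d
  decide

lemma fin4_exists_fourth {a b c : Fin 4} (hab : a ≠ b) (hac : a ≠ c) (hbc : b ≠ c) :
    ∃ d, a ≠ d ∧ b ≠ d ∧ c ≠ d := by
  revert hab hac hbc
  revert a b c
  decide

/-- `H2`: targets whose `z`-part contains the index missing from the `f`-part. -/
lemma bulk_mem_H2 (bV : Module.Basis (Fin 4) K V) (e : V →ₗ[K] Z) {a b c d : Fin 4}
    (hab : a ≠ b) (hac : a ≠ c) (had : a ≠ d) (hbc : b ≠ c) (hbd : b ≠ d) (hcd : c ≠ d) :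
    (ι K (bV.coord a) * ι K (bV.coord b) * ι K (bV.coord d)) ⊗ₜ[K]
        (ι K (e (bV c)) * ι K (e (bV d)))
      ∈ LinearMap.range (wedgeMap K V Z e 2 1 1) := by
  refine ⟨(⟨ι K (bV.coord a) * ι K (bV.coord b), mem_exteriorPower_two _ _⟩ :
      ⋀[K]^2 (Module.Dual K V)) ⊗ₜ[K]
      (⟨ι K (e (bV c)), mem_exteriorPower_one _⟩ : ⋀[K]^1 Z), ?_⟩
  rw [wedgeMap_tmul, tmul_mul_coframe bV e]
  rw [Finset.sum_eq_single_of_mem d (Finset.mem_univ d)]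
  intro i _ hid
  rcases fin4_cases hab hac had hbc hbd hcd i with rfl | rfl | rfl | rfl
  · rw [triple_repeat_left, zero_tmul]
  · rw [triple_repeat_right, zero_tmul]
  · rw [ι_sq_zero, tmul_zero]
  · exact absurd rfl hid

/-- `H1`: targets whose `z`-part indices both appear in the `f`-part. -/
lemma bulk_mem_H1 [CharZero K] (bV : Module.Basis (Fin 4) K V) (e : V →ₗ[K] Z) {w x y : Fin 4}
    (hwx : w ≠ x) (hwy : w ≠ y) (hxy : x ≠ y) :
    (ι K (bV.coord w) * ι K (bV.coord x) * ι K (bV.coord y)) ⊗ₜ[K]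
        (ι K (e (bV x)) * ι K (e (bV y)))
      ∈ LinearMap.range (wedgeMap K V Z e 2 1 1) := by
  obtain ⟨d, hwd, hxd, hyd⟩ := fin4_exists_fourth hwx hwy hxy
  set T1 := (ι K (bV.coord w) * ι K (bV.coord x) * ι K (bV.coord y)) ⊗ₜ[K]
    (ι K (e (bV x)) * ι K (e (bV y))) with hT1
  set T2 := (ι K (bV.coord w) * ι K (bV.coord x) * ι K (bV.coord d)) ⊗ₜ[K]
    (ι K (e (bV x)) * ι K (e (bV d))) with hT2
  set T3 := (ι K (bV.coord w) * ι K (bV.coord y) * ι K (bV.coord d)) ⊗ₜ[K]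
    (ι K (e (bV y)) * ι K (e (bV d))) with hT3
  set X1 := ((⟨ι K (bV.coord w) * ι K (bV.coord x), mem_exteriorPower_two _ _⟩ :
      ⋀[K]^2 (Module.Dual K V)) ⊗ₜ[K]
      (⟨ι K (e (bV x)), mem_exteriorPower_one _⟩ : ⋀[K]^1 Z)) with hX1
  set X2 := ((⟨ι K (bV.coord w) * ι K (bV.coord y), mem_exteriorPower_two _ _⟩ :
      ⋀[K]^2 (Module.Dual K V)) ⊗ₜ[K]
      (⟨ι K (e (bV y)), mem_exteriorPower_one _⟩ : ⋀[K]^1 Z)) with hX2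
  set X3 := ((⟨ι K (bV.coord w) * ι K (bV.coord d), mem_exteriorPower_two _ _⟩ :
      ⋀[K]^2 (Module.Dual K V)) ⊗ₜ[K]
      (⟨ι K (e (bV d)), mem_exteriorPower_one _⟩ : ⋀[K]^1 Z)) with hX3
  have key : ∀ (u r s : Fin 4), w ≠ u → w ≠ r → w ≠ s → u ≠ r → u ≠ s → r ≠ s →
      wedgeMap K V Z e 2 1 1
        ((⟨ι K (bV.coord w) * ι K (bV.coord u), mem_exteriorPower_two _ _⟩ :
          ⋀[K]^2 (Module.Dual K V)) ⊗ₜ[K]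
          (⟨ι K (e (bV u)), mem_exteriorPower_one _⟩ : ⋀[K]^1 Z)) =
        (ι K (bV.coord w) * ι K (bV.coord u) * ι K (bV.coord r)) ⊗ₜ[K]
            (ι K (e (bV u)) * ι K (e (bV r))) +
          (ι K (bV.coord w) * ι K (bV.coord u) * ι K (bV.coord s)) ⊗ₜ[K]
            (ι K (e (bV u)) * ι K (e (bV s))) := by
    intro u r s hwu hwr hws hur hus hrs
    rw [wedgeMap_tmul, tmul_mul_coframe bV e]
    have h0 : ∀ i ∈ (Finset.univ : Finset (Fin 4)), i ∉ ({r, s} : Finset (Fin 4)) →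
        (ι K (bV.coord w) * ι K (bV.coord u) * ι K (bV.coord i)) ⊗ₜ[K]
          (ι K (e (bV u)) * ι K (e (bV i))) = 0 := by
      intro i _ hi
      rcases fin4_cases hwu hwr hws hur hus hrs i with rfl | rfl | rfl | rfl
      · rw [triple_repeat_left, zero_tmul]
      · rw [triple_repeat_right, zero_tmul]
      · exact absurd (Finset.mem_insert_self _ _) hi
      · exact absurd (Finset.mem_insert_of_mem (Finset.mem_singleton_self _)) hi
    rw [← Finset.sum_subset (Finset.subset_univ ({r, s} : Finset (Fin 4))) h0,
      Finset.sum_insert (by simpa using hrs), Finset.sum_singleton]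
  have hE1 : wedgeMap K V Z e 2 1 1 X1 = T1 + T2 :=
    key x y d hwx hwy hwd hxy hxd hyd
  have hE2 : wedgeMap K V Z e 2 1 1 X2 = T1 + T3 := by
    rw [hX2, key y x d hwy hwx hwd (Ne.symm hxy) hyd hxd]
    congr 1
    rw [triple_swap23 (bV.coord w) (bV.coord x) (bV.coord y),
      ι_anticomm (e (bV y)) (e (bV x)), neg_tmul, tmul_neg, neg_neg]
  have hE3 : wedgeMap K V Z e 2 1 1 X3 = T2 + T3 := by
    rw [hX3, key d x y hwd hwx hwy (Ne.symm hxd) (Ne.symm hyd) hxy]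
    congr 1
    · rw [triple_swap23 (bV.coord w) (bV.coord x) (bV.coord d),
        ι_anticomm (e (bV d)) (e (bV x)), neg_tmul, tmul_neg, neg_neg]
    · rw [triple_swap23 (bV.coord w) (bV.coord y) (bV.coord d),
        ι_anticomm (e (bV d)) (e (bV y)), neg_tmul, tmul_neg, neg_neg]
  refine ⟨(2 : K)⁻¹ • (X1 + X2 - X3), ?_⟩
  rw [map_smul, map_sub, map_add, hE1, hE2, hE3,
    show (T1 + T2) + (T1 + T3) - (T2 + T3) = (2 : K) • T1 by rw [two_smul]; abel,
    smul_smul, inv_mul_cancel₀ (by norm_num : (2 : K) ≠ 0), one_smul]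

lemma bulk_gen_mem [CharZero K] (bV : Module.Basis (Fin 4) K V) (e : V →ₗ[K] Z) {a b c : Fin 4}
    (p q : Fin 4) (hab : a ≠ b) (hac : a ≠ c) (hbc : b ≠ c) :
    (ι K (bV.coord a) * ι K (bV.coord b) * ι K (bV.coord c)) ⊗ₜ[K]
        (ι K (e (bV p)) * ι K (e (bV q)))
      ∈ LinearMap.range (wedgeMap K V Z e 2 1 1) := by
  obtain ⟨d, had, hbd, hcd⟩ := fin4_exists_fourth hab hac hbc
  rcases fin4_cases hab hac had hbc hbd hcd p with hp | hp | hp | hp <;>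
    rcases fin4_cases hab hac had hbc hbd hcd q with hq | hq | hq | hq <;>
      rw [hp, hq]
  · rw [ι_sq_zero, tmul_zero]
    exact Submodule.zero_mem _
  · rw [← triple_cyc (bV.coord a) (bV.coord b) (bV.coord c)]
    exact bulk_mem_H1 bV e (Ne.symm hac) (Ne.symm hbc) hab
  · rw [triple_swap12 (bV.coord b) (bV.coord a) (bV.coord c), neg_tmul]
    exact Submodule.neg_mem _ (bulk_mem_H1 bV e (Ne.symm hab) hbc hac)
  · rw [ι_anticomm (e (bV a)) (e (bV d)), tmul_neg]
    refine Submodule.neg_mem _ ?_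
    rw [← triple_cyc' (bV.coord a) (bV.coord b) (bV.coord c)]
    exact bulk_mem_H2 bV e hbc hbd (Ne.symm hab) hcd (Ne.symm hac) (Ne.symm had)
  · rw [← neg_neg (ι K (bV.coord a) * ι K (bV.coord b) * ι K (bV.coord c)),
      ← triple_rev (bV.coord a) (bV.coord b) (bV.coord c), neg_tmul]
    exact Submodule.neg_mem _ (bulk_mem_H1 bV e (Ne.symm hbc) (Ne.symm hac) (Ne.symm hab))
  · rw [ι_sq_zero, tmul_zero]
    exact Submodule.zero_mem _
  · exact bulk_mem_H1 bV e hab hac hbc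
  · rw [ι_anticomm (e (bV b)) (e (bV d)), tmul_neg]
    refine Submodule.neg_mem _ ?_
    rw [← triple_cyc (bV.coord a) (bV.coord b) (bV.coord c)]
    exact bulk_mem_H2 bV e (Ne.symm hac) hcd (Ne.symm hbc) had hab (Ne.symm hbd)
  · rw [← triple_cyc' (bV.coord a) (bV.coord b) (bV.coord c)]
    exact bulk_mem_H1 bV e hbc (Ne.symm hab) (Ne.symm hac)
  · rw [← neg_neg (ι K (bV.coord a) * ι K (bV.coord b) * ι K (bV.coord c)),
      ← triple_swap23 (bV.coord a) (bV.coord b) (bV.coord c), neg_tmul]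
    exact Submodule.neg_mem _ (bulk_mem_H1 bV e hac hab (Ne.symm hbc))
  · rw [ι_sq_zero, tmul_zero]
    exact Submodule.zero_mem _
  · rw [ι_anticomm (e (bV c)) (e (bV d)), tmul_neg]
    exact Submodule.neg_mem _ (bulk_mem_H2 bV e hab had hac hbd hbc (Ne.symm hcd))
  · rw [← triple_cyc' (bV.coord a) (bV.coord b) (bV.coord c)]
    exact bulk_mem_H2 bV e hbc hbd (Ne.symm hab) hcd (Ne.symm hac) (Ne.symm had)
  · rw [← triple_cyc (bV.coord a) (bV.coord b) (bV.coord c)]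
    exact bulk_mem_H2 bV e (Ne.symm hac) hcd (Ne.symm hbc) had hab (Ne.symm hbd)
  · exact bulk_mem_H2 bV e hab had hac hbd hbc (Ne.symm hcd)
  · rw [ι_sq_zero, tmul_zero]
    exact Submodule.zero_mem _

lemma bulk_range_ge [CharZero K] (hV : Module.finrank K V = 4) (e : V ≃ₗ[K] Z) :
    LinearMap.range (gradedIncl K V Z 3 2) ≤
      LinearMap.range (wedgeMap K V Z (e : V →ₗ[K] Z) 2 1 1) := by
  classical
  set bV : Module.Basis (Fin 4) K V := Module.finBasisOfFinrankEq K V hV with hbV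
  set zfam : Fin 4 → Z := fun i => (e : V →ₗ[K] Z) (bV i) with hzfam
  have hzspan : Submodule.span K (Set.range zfam) = ⊤ := by
    have h := (bV.map e).span_eq
    rwa [show ⇑(bV.map e) = zfam from funext fun i => by
      rw [Module.Basis.map_apply, hzfam]; rfl] at h
  rw [gradedIncl, TensorProduct.range_map_eq_span_tmul, Submodule.span_le]
  rintro _ ⟨aa, bb, rfl⟩
  have ha : ((⋀[K]^3 (Module.Dual K V)).subtype aa : ExteriorAlgebra K (Module.Dual K V)) ∈
      Submodule.span K (Set.range fun σ : Fin 3 → Fin 4 => ιMulti K 3 (⇑bV.dualBasis ∘ σ)) := by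
    rw [← exteriorPower_eq_span (⇑bV.dualBasis) bV.dualBasis.span_eq 3]; exact aa.2
  have hb : ((⋀[K]^2 Z).subtype bb : ExteriorAlgebra K Z) ∈
      Submodule.span K (Set.range fun τ : Fin 2 → Fin 4 => ιMulti K 2 (zfam ∘ τ)) := by
    rw [← exteriorPower_eq_span zfam hzspan 2]; exact bb.2
  have hmem := Submodule.apply_mem_map₂
    (TensorProduct.mk K (ExteriorAlgebra K (Module.Dual K V)) (ExteriorAlgebra K Z)) ha hb
  rw [Submodule.map₂_span_span] at hmem
  refine Submodule.span_le.mpr ?_ hmem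
  rintro _ ⟨u1, ⟨σ, rfl⟩, u2, ⟨τ, rfl⟩, rfl⟩
  show ιMulti K 3 (⇑bV.dualBasis ∘ σ) ⊗ₜ[K] ιMulti K 2 (zfam ∘ τ) ∈
    LinearMap.range (wedgeMap K V Z (e : V →ₗ[K] Z) 2 1 1)
  by_cases hσ : Function.Injective σ
  swap
  · rw [ιMulti_comp_eq_zero_of_not_injective σ _ hσ, zero_tmul]
    exact Submodule.zero_mem _
  have hF : ιMulti K 3 (⇑bV.dualBasis ∘ σ) =
      ι K (bV.coord (σ 0)) * ι K (bV.coord (σ 1)) * ι K (bV.coord (σ 2)) := by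
    rw [ιMulti_three_eq]
    simp [Function.comp, Module.Basis.coe_dualBasis]
  rw [hF, ιMulti_two_eq]
  simp only [Function.comp_apply]
  exact bulk_gen_mem bV (e : V →ₗ[K] Z) (τ 0) (τ 1)
    (fun h => absurd (hσ h) (by decide)) (fun h => absurd (hσ h) (by decide))
    (fun h => absurd (hσ h) (by decide))

lemma bulk_injective [CharZero K] (hV : Module.finrank K V = 4)
    (hZ : Module.finrank K Z = 4) (e : V ≃ₗ[K] Z) :
    Function.Injective (wedgeMap K V Z (e : V →ₗ[K] Z) 2 1 1) := by
  classical
  set bV : Module.Basis (Fin 4) K V := Module.finBasisOfFinrankEq K V hV with hbV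
  set bZ : Module.Basis (Fin 4) K Z := bV.map e with hbZ
  haveI f1 : FiniteDimensional K (⋀[K]^2 (Module.Dual K V) :
    Submodule K (ExteriorAlgebra K (Module.Dual K V))) :=
    finiteDimensional_exteriorPower bV.dualBasis 2
  haveI f2 : FiniteDimensional K (⋀[K]^1 Z : Submodule K (ExteriorAlgebra K Z)) :=
    finiteDimensional_exteriorPower bZ 1
  haveI f3 : FiniteDimensional K (⋀[K]^3 (Module.Dual K V) :
    Submodule K (ExteriorAlgebra K (Module.Dual K V))) :=
    finiteDimensional_exteriorPower bV.dualBasis 3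
  haveI f4 : FiniteDimensional K (⋀[K]^2 Z : Submodule K (ExteriorAlgebra K Z)) :=
    finiteDimensional_exteriorPower bZ 2
  have hrange : LinearMap.range (wedgeMap K V Z (e : V →ₗ[K] Z) 2 1 1) =
      LinearMap.range (gradedIncl K V Z 3 2) :=
    le_antisymm (range_wedgeMap_le _ 2 1) (bulk_range_ge hV e)
  have hinj : Function.Injective (gradedIncl K V Z 3 2) :=
    tmap_injective (Submodule.injective_subtype _) (Submodule.injective_subtype _)
  have hfr : Module.finrank K ((⋀[K]^2 (Module.Dual K V)) ⊗[K] (⋀[K]^1 Z)) =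
      Module.finrank K ↥(LinearMap.range (gradedIncl K V Z 3 2)) := by
    rw [LinearMap.finrank_range_of_inj hinj, Module.finrank_tensorProduct,
      Module.finrank_tensorProduct, finrank_exteriorPower bV.dualBasis 2,
      finrank_exteriorPower bZ 1, finrank_exteriorPower bV.dualBasis 3,
      finrank_exteriorPower bZ 2]
    rfl
  set W' := (wedgeMap K V Z (e : V →ₗ[K] Z) 2 1 1).codRestrict
    (LinearMap.range (gradedIncl K V Z 3 2))
    (fun x => hrange ▸ LinearMap.mem_range_self _ x) with hW'
  have hsurj : Function.Surjective W' := by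
    rintro ⟨y, hy⟩
    rw [← hrange] at hy
    obtain ⟨x, hx⟩ := hy
    exact ⟨x, Subtype.ext hx⟩
  haveI t1 : FiniteDimensional K ((⋀[K]^2 (Module.Dual K V)) ⊗[K] (⋀[K]^1 Z)) :=
    Module.Finite.tensorProduct K _ _
  haveI t2 : FiniteDimensional K ((⋀[K]^3 (Module.Dual K V)) ⊗[K] (⋀[K]^2 Z)) :=
    Module.Finite.tensorProduct K _ _
  haveI : FiniteDimensional K ↥(LinearMap.range (gradedIncl K V Z 3 2)) :=
    Module.Finite.range (gradedIncl K V Z 3 2)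
  have hinj' : Function.Injective W' :=
    (LinearMap.injective_iff_surjective_of_finrank_eq_finrank
      (V := (⋀[K]^2 (Module.Dual K V)) ⊗[K] (⋀[K]^1 Z)) (f := W') hfr).mpr hsurj
  intro x y hxy
  exact hinj' (Subtype.ext hxy)

end Bulk

theorem boundary_map_surjective_not_injective_N4 (K V Z : Type*) [Field K] [CharZero K]
    [AddCommGroup V] [Module K V] [AddCommGroup Z] [Module K Z]
    [FiniteDimensional K V] [FiniteDimensional K Z]
    (hV : Module.finrank K V = 4) (hZ : Module.finrank K Z = 4)
    (e : V ≃ₗ[K] Z) (V' : Submodule K V) (hV' : Module.finrank K V' = 3) :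
    (LinearMap.range (wedgeMap K V' Z ((e : V →ₗ[K] Z).comp V'.subtype) 2 1 1) =
        LinearMap.range (gradedIncl K V' Z 3 2) ∧
      ¬ Function.Injective (wedgeMap K V' Z ((e : V →ₗ[K] Z).comp V'.subtype) 2 1 1)) ∧
    (Function.Injective (wedgeMap K V Z (e : V →ₗ[K] Z) 2 1 1) ∧
      LinearMap.range (wedgeMap K V Z (e : V →ₗ[K] Z) 2 1 1) =
        LinearMap.range (gradedIncl K V Z 3 2)) := by
  have he' : Function.Injective ⇑((e : V →ₗ[K] Z).comp V'.subtype) := by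
    rw [LinearMap.coe_comp, LinearEquiv.coe_coe]
    exact e.injective.comp (Submodule.injective_subtype V')
  refine ⟨⟨?_, ?_⟩, ?_, ?_⟩
  · exact le_antisymm (range_wedgeMap_le _ 2 1) (boundary_range_ge hV' hZ _ he')
  · exact boundary_not_injective hV' _ he'
  · exact bulk_injective hV hZ e
  · exact le_antisymm (range_wedgeMap_le _ 2 1) (bulk_range_ge hV e)
end
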